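/- For every s in the open interval (0,1) and every real λ > 0, the following integral representation holds: λ^{-s} = (2 sin(πs)/π) ∫_{-∞}^{+∞} e^{2sy} (1 + e^{2y} λ)^{-1} dy. -/

import Mathlib

open Real MeasureTheory

lemma beta_reflection (s : ℝ) (h0 : 0 < s) (h1 : s < 1) :
    ∫ x in (0:ℝ)..1, x ^ (s - 1) * (1 - x) ^ (-s) = π / Real.sin (π * s) := by
  have hb : Complex.betaIntegral s (1 - s) = ↑π / Complex.sin (↑π * ↑s) := by
    have h := Complex.Gamma_mul_Gamma_eq_betaIntegral (s := (s : ℂ)) (t := 1 - (s : ℂ))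
      (by simpa using h0) (by simp [Complex.sub_re]; linarith)
    rw [add_sub_cancel, Complex.Gamma_one, one_mul] at h
    rw [← h, Complex.Gamma_mul_Gamma_one_sub]
  have hco : Complex.betaIntegral (s : ℂ) (1 - s) =
      ((∫ x in (0:ℝ)..1, x ^ (s - 1) * (1 - x) ^ (-s) : ℝ) : ℂ) := by
    rw [Complex.betaIntegral, ← intervalIntegral.integral_ofReal]
    refine intervalIntegral.integral_congr fun x hx => ?_
    rw [Set.uIcc_of_le (by norm_num)] at hx
    push_cast
    rw [Complex.ofReal_cpow hx.1, Complex.ofReal_cpow (by linarith [hx.2] : (0:ℝ) ≤ 1 - x)]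
    push_cast
    ring_nf
  rw [hco] at hb
  have : ((π / Real.sin (π * s) : ℝ) : ℂ) = ↑π / Complex.sin (↑π * ↑s) := by
    push_cast [Complex.ofReal_sin]
    ring_nf
  rw [← this] at hb
  exact_mod_cast hb

theorem balakrishnan_integral_representation
    (s : ℝ) (hs : s ∈ Set.Ioo (0 : ℝ) 1) (lam : ℝ) (hlam : 0 < lam) :
    lam ^ (-s) =
      (2 * Real.sin (Real.pi * s) / Real.pi) *
        ∫ y : ℝ, Real.exp (2 * s * y) * (1 + Real.exp (2 * y) * lam)⁻¹ := by
  obtain ⟨h0, h1⟩ := hs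
  set u : ℝ → ℝ := fun y => Real.exp (2 * y) * lam with hu_def
  have hu : ∀ y, 0 < u y := fun y => mul_pos (Real.exp_pos _) hlam
  have h1u : ∀ y, 0 < 1 + u y := fun y => by positivity
  set f : ℝ → ℝ := fun y => u y / (1 + u y) with hf_def
  set f' : ℝ → ℝ := fun y => 2 * u y / (1 + u y) ^ 2 with hf'_def
  set g : ℝ → ℝ := fun t => t ^ (s - 1) * (1 - t) ^ (-s) with hg_def
  -- derivative
  have hderiv : ∀ y, HasDerivAt f (f' y) y := by
    intro y
    have hdu : HasDerivAt u (2 * u y) y := by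
      have h2 : HasDerivAt (fun y : ℝ => 2 * y) 2 y := by
        simpa using (hasDerivAt_id y).const_mul 2
      have := (h2.exp).mul_const lam
      refine this.congr_deriv ?_
      simp only [hu_def]; ring
    have := hdu.div ((hasDerivAt_const y (1:ℝ)).add hdu) (h1u y).ne'
    refine this.congr_deriv ?_
    simp only [hf'_def, Pi.add_apply]
    field_simp
    ring
  -- injectivity
  have hinj : Function.Injective f := by
    intro a b hab
    have hua : u a = u b := by
      have h := (div_eq_div_iff (h1u a).ne' (h1u b).ne').1 hab
      nlinarith [h]
    have := Real.exp_injective (mul_right_cancel₀ hlam.ne' hua)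
    linarith
  -- range
  have hrange : Set.range f = Set.Ioo (0 : ℝ) 1 := by
    ext t
    constructor
    · rintro ⟨y, rfl⟩
      exact ⟨div_pos (hu y) (h1u y), (div_lt_one (h1u y)).2 (by linarith [hu y])⟩
    · rintro ⟨ht0, ht1⟩
      refine ⟨Real.log (t / ((1 - t) * lam)) / 2, ?_⟩
      have h1t : 0 < 1 - t := by linarith
      have hpos : 0 < t / ((1 - t) * lam) := div_pos ht0 (mul_pos h1t hlam)
      have he : Real.exp (2 * (Real.log (t / ((1 - t) * lam)) / 2)) = t / ((1 - t) * lam) := by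
        rw [mul_div_cancel₀ _ (two_ne_zero), Real.exp_log hpos]
      simp only [hf_def, hu_def, he]
      field_simp
      ring
  -- pointwise identity
  have hpt : ∀ y, |f' y| • g (f y) =
      2 * lam ^ s * (Real.exp (2 * s * y) * (1 + Real.exp (2 * y) * lam)⁻¹) := by
    intro y
    have hA := hu y; have h1A := h1u y
    have habs : |f' y| = 2 * u y / (1 + u y) ^ 2 :=
      abs_of_pos (by positivity)
    have e1 : 1 - f y = (1 + u y)⁻¹ := by
      rw [show f y = u y / (1 + u y) from rfl]
      field_simp
      ring
    have e4 : u y ^ s = Real.exp (2 * s * y) * lam ^ s := by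
      rw [hu_def, Real.mul_rpow (Real.exp_pos _).le hlam.le, ← Real.exp_mul]
      ring_nf
    have e2 : u y ^ (s - 1) * u y = u y ^ s := by
      rw [← Real.rpow_add_one hA.ne' (s - 1)]; ring_nf
    have e3 : (1 + u y) ^ (s - 1) * (1 + u y) = (1 + u y) ^ s := by
      rw [← Real.rpow_add_one h1A.ne' (s - 1)]; ring_nf
    rw [smul_eq_mul, habs, hg_def]
    simp only [e1]
    rw [Real.inv_rpow h1A.le, Real.rpow_neg h1A.le, inv_inv,
      show f y = u y / (1 + u y) from rfl, Real.div_rpow hA.le h1A.le]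
    have e5 : 2 * lam ^ s * (Real.exp (2 * s * y) * (1 + Real.exp (2 * y) * lam)⁻¹)
        = 2 * u y ^ s * (1 + u y)⁻¹ := by
      rw [e4]; simp only [hu_def]; ring
    rw [e5, ← e2, ← e3]
    have hne1 : (1 + u y) ^ (s - 1) ≠ 0 := (Real.rpow_pos_of_pos h1A _).ne'
    field_simp
  -- change of variables
  have key : (∫ t in Set.Ioo (0:ℝ) 1, g t) =
      2 * lam ^ s * ∫ y : ℝ, Real.exp (2 * s * y) * (1 + Real.exp (2 * y) * lam)⁻¹ := by
    have h := integral_image_eq_integral_abs_deriv_smul (s := Set.univ) MeasurableSet.univ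
      (fun y _ => (hderiv y).hasDerivWithinAt) (hinj.injOn) g
    rw [Set.image_univ, hrange, Measure.restrict_univ] at h
    rw [h]
    simp_rw [hpt]
    rw [integral_const_mul]
  -- Beta value
  have hbeta : (∫ t in Set.Ioo (0:ℝ) 1, g t) = π / Real.sin (π * s) := by
    rw [← integral_Ioc_eq_integral_Ioo, ← intervalIntegral.integral_of_le (by norm_num : (0:ℝ) ≤ 1)]
    exact beta_reflection s h0 h1
  rw [hbeta] at key
  have hsin : 0 < Real.sin (π * s) :=
    Real.sin_pos_of_pos_of_lt_pi (by positivity) (by nlinarith [Real.pi_pos])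
  have hls : 0 < lam ^ s := Real.rpow_pos_of_pos hlam s
  have hI : (∫ y : ℝ, Real.exp (2 * s * y) * (1 + Real.exp (2 * y) * lam)⁻¹)
      = π / (Real.sin (π * s) * (2 * lam ^ s)) := by
    field_simp at key ⊢
    have hc : (∫ y : ℝ, rexp (s * 2 * y) / (1 + rexp (2 * y) * lam)) =
        ∫ y : ℝ, rexp (s * 2 * y) / (1 + lam * rexp (2 * y)) := by
      simp_rw [mul_comm lam]
    rw [hc] at key
    linarith [key]
  rw [hI, Real.rpow_neg hlam.le]
  field_simp
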